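/- Telescoping performance difference: for any policy π and any function Q : S × A → ℝ, letting π_Q be the greedy policy of Q, J(π) − J(π_Q) ≤ (1/(1-γ)) · E_{d_π}[TQ − Q] + (1/(1-γ)) · E_{d_{π_Q}}[Q − TQ]. -/

import Mathlib

open scoped BigOperators

/-- Time-`t` state-action marginal distribution of a policy in a finite MDP. -/
noncomputable def marg {S A : Type*} [Fintype S] [Fintype A]
    (d0 : S → ℝ) (P : S → A → S → ℝ) (pol : S → A → ℝ) : ℕ → S → A → ℝ
  | 0 => fun s a => d0 s * pol s a
  | (t + 1) => fun s' a' => (∑ s, ∑ a, marg d0 P pol t s a * P s a s') * pol s' a'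

/-- Normalized discounted state-action occupancy `d_π(s,a)`. -/
noncomputable def occ {S A : Type*} [Fintype S] [Fintype A]
    (γ : ℝ) (d0 : S → ℝ) (P : S → A → S → ℝ) (pol : S → A → ℝ) (s : S) (a : A) : ℝ :=
  (1 - γ) * ∑' t : ℕ, γ ^ t * marg d0 P pol t s a

/-- Expected discounted return `J(π)`. -/
noncomputable def Jret {S A : Type*} [Fintype S] [Fintype A]
    (γ : ℝ) (d0 : S → ℝ) (P : S → A → S → ℝ) (R : S → A → ℝ) (pol : S → A → ℝ) : ℝ :=
  ∑' t : ℕ, γ ^ t * ∑ s, ∑ a, marg d0 P pol t s a * R s a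

/-- Bellman optimality operator `(T Q)(s,a) = R(s,a) + γ Σ_{s'} P(s'|s,a) max_{a'} Q(s',a')`. -/
noncomputable def bellmanT {S A : Type*} [Fintype S] [Fintype A] [Nonempty A]
    (γ : ℝ) (P : S → A → S → ℝ) (R : S → A → ℝ) (Q : S → A → ℝ) (s : S) (a : A) : ℝ :=
  R s a + γ * ∑ s', P s a s' * (⨆ a', Q s' a')

/-- A deterministic policy viewed as a stochastic policy. -/
noncomputable def detPol {S A : Type*} [DecidableEq A] (g : S → A) : S → A → ℝ :=
  fun s a => if a = g s then 1 else 0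

section autohelpers

section helpers
variable {S A : Type*} [Fintype S] [Fintype A]
variable {d0 : S → ℝ} {P : S → A → S → ℝ} {pol : S → A → ℝ}

lemma marg_nonneg (hd0 : ∀ s, 0 ≤ d0 s) (hP : ∀ s a s', 0 ≤ P s a s')
    (hpol : ∀ s a, 0 ≤ pol s a) : ∀ t s a, 0 ≤ marg d0 P pol t s a := by
  intro t
  induction t with
  | zero => intro s a; exact mul_nonneg (hd0 s) (hpol s a)
  | succ t ih =>
    intro s a
    exact mul_nonneg (Finset.sum_nonneg fun s' _ => Finset.sum_nonneg fun a' _ =>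
      mul_nonneg (ih s' a') (hP s' a' s)) (hpol s a)

lemma marg_sum (hd0sum : ∑ s, d0 s = 1) (hPsum : ∀ s a, ∑ s', P s a s' = 1)
    (hpolsum : ∀ s, ∑ a, pol s a = 1) :
    ∀ t, ∑ s, ∑ a, marg d0 P pol t s a = 1 := by
  intro t
  induction t with
  | zero =>
    simp only [marg, ← Finset.mul_sum]
    simp [hpolsum, hd0sum]
  | succ t ih =>
    simp only [marg, ← Finset.mul_sum, hpolsum, mul_one]
    rw [Finset.sum_comm]
    calc ∑ s, ∑ s', ∑ a, marg d0 P pol t s a * P s a s'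
        = ∑ s, ∑ a, marg d0 P pol t s a := by
          refine Finset.sum_congr rfl fun s _ => ?_
          rw [Finset.sum_comm]
          refine Finset.sum_congr rfl fun a _ => ?_
          rw [← Finset.mul_sum, hPsum, mul_one]
      _ = 1 := ih

lemma marg_le_one (hd0 : ∀ s, 0 ≤ d0 s) (hP : ∀ s a s', 0 ≤ P s a s')
    (hpol : ∀ s a, 0 ≤ pol s a) (hd0sum : ∑ s, d0 s = 1)
    (hPsum : ∀ s a, ∑ s', P s a s' = 1) (hpolsum : ∀ s, ∑ a, pol s a = 1)
    (t : ℕ) (s : S) (a : A) : marg d0 P pol t s a ≤ 1 := by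
  have h := marg_sum hd0sum hPsum hpolsum (d0 := d0) (P := P) (pol := pol) t
  calc marg d0 P pol t s a ≤ ∑ a, marg d0 P pol t s a :=
        Finset.single_le_sum (fun a' _ => marg_nonneg hd0 hP hpol t s a') (Finset.mem_univ a)
    _ ≤ ∑ s, ∑ a, marg d0 P pol t s a :=
        Finset.single_le_sum (fun s' _ => Finset.sum_nonneg fun a' _ =>
          marg_nonneg hd0 hP hpol t s' a') (Finset.mem_univ s)
    _ = 1 := h

end helpers



section helpers2
variable {S A : Type*} [Fintype S] [Fintype A]
variable {γ : ℝ} {d0 : S → ℝ} {P : S → A → S → ℝ} {pol : S → A → ℝ}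

lemma summable_finset_sum' {ι : Type*} (s : Finset ι) (f : ι → ℕ → ℝ)
    (hf : ∀ i ∈ s, Summable (f i)) : Summable (fun t => ∑ i ∈ s, f i t) := by
  classical
  induction s using Finset.induction with
  | empty => simpa using summable_zero
  | @insert i s hi ih =>
    simp only [Finset.sum_insert hi]
    exact (hf i (Finset.mem_insert_self i s)).add
      (ih fun j hj => hf j (Finset.mem_insert_of_mem hj))

lemma summable_geom_mul (hγ0 : 0 ≤ γ) (hγ1 : γ < 1) (c : ℕ → ℝ) (C : ℝ)
    (hc : ∀ t, |c t| ≤ C) : Summable (fun t => γ ^ t * c t) := by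
  refine Summable.of_norm_bounded
    ((summable_geometric_of_lt_one hγ0 hγ1).mul_left C) (fun t => ?_)
  rw [Real.norm_eq_abs, abs_mul, abs_pow, abs_of_nonneg hγ0, mul_comm]
  exact mul_le_mul_of_nonneg_right (hc t) (pow_nonneg hγ0 t)

variable (hd0 : ∀ s, 0 ≤ d0 s) (hP : ∀ s a s', 0 ≤ P s a s')
  (hpol : ∀ s a, 0 ≤ pol s a) (hd0sum : ∑ s, d0 s = 1)
  (hPsum : ∀ s a, ∑ s', P s a s' = 1) (hpolsum : ∀ s, ∑ a, pol s a = 1)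

include hd0 hP hpol hd0sum hPsum hpolsum

lemma abs_marg_sum_le (F : S → A → ℝ) (t : ℕ) :
    |∑ s, ∑ a, marg d0 P pol t s a * F s a| ≤ ∑ s, ∑ a, |F s a| := by
  calc |∑ s, ∑ a, marg d0 P pol t s a * F s a|
      ≤ ∑ s, |∑ a, marg d0 P pol t s a * F s a| := Finset.abs_sum_le_sum_abs _ _
    _ ≤ ∑ s, ∑ a, |marg d0 P pol t s a * F s a| :=
        Finset.sum_le_sum fun s _ => Finset.abs_sum_le_sum_abs _ _
    _ ≤ ∑ s, ∑ a, |F s a| := by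
        refine Finset.sum_le_sum fun s _ => Finset.sum_le_sum fun a _ => ?_
        rw [abs_mul, abs_of_nonneg (marg_nonneg hd0 hP hpol t s a)]
        calc marg d0 P pol t s a * |F s a| ≤ 1 * |F s a| :=
              mul_le_mul_of_nonneg_right
                (marg_le_one hd0 hP hpol hd0sum hPsum hpolsum t s a) (abs_nonneg _)
          _ = |F s a| := one_mul _

lemma summable_marg (hγ0 : 0 ≤ γ) (hγ1 : γ < 1) (F : S → A → ℝ) (s : S) (a : A) :
    Summable (fun t => γ ^ t * (marg d0 P pol t s a * F s a)) := by
  refine summable_geom_mul hγ0 hγ1 _ |F s a| (fun t => ?_)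
  rw [abs_mul, abs_of_nonneg (marg_nonneg hd0 hP hpol t s a)]
  calc marg d0 P pol t s a * |F s a| ≤ 1 * |F s a| :=
        mul_le_mul_of_nonneg_right
          (marg_le_one hd0 hP hpol hd0sum hPsum hpolsum t s a) (abs_nonneg _)
    _ = |F s a| := one_mul _

lemma occ_expand (hγ0 : 0 ≤ γ) (hγ1 : γ < 1) (F : S → A → ℝ) :
    ∑ s, ∑ a, occ γ d0 P pol s a * F s a
      = (1 - γ) * ∑' t, γ ^ t * ∑ s, ∑ a, marg d0 P pol t s a * F s a := by
  have hsa : ∀ s a, Summable (fun t => γ ^ t * (marg d0 P pol t s a * F s a)) :=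
    summable_marg hd0 hP hpol hd0sum hPsum hpolsum hγ0 hγ1 F
  have h1 : ∀ s a, occ γ d0 P pol s a * F s a
      = (1 - γ) * ∑' t, γ ^ t * (marg d0 P pol t s a * F s a) := by
    intro s a
    rw [occ, mul_assoc, ← tsum_mul_right]
    congr 1
    exact tsum_congr fun t => by ring
  simp only [h1, ← Finset.mul_sum]
  congr 1
  have h2 : ∀ s, ∑ a, ∑' t, γ ^ t * (marg d0 P pol t s a * F s a)
      = ∑' t, ∑ a, γ ^ t * (marg d0 P pol t s a * F s a) := by
    intro s
    exact (Summable.tsum_finsetSum fun a _ => hsa s a).symm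
  simp only [h2]
  have hsum2 : ∀ s, Summable (fun t => ∑ a, γ ^ t * (marg d0 P pol t s a * F s a)) := by
    intro s
    exact summable_finset_sum' _ _ (fun a _ => hsa s a)
  rw [← Summable.tsum_finsetSum (fun s _ => hsum2 s)]
  refine tsum_congr fun t => ?_
  rw [Finset.mul_sum]
  exact Finset.sum_congr rfl fun s _ => by rw [Finset.mul_sum]

omit hd0 hP hpol hd0sum hPsum hpolsum in
lemma marg_step (Q : S → A → ℝ) (t : ℕ) :
    ∑ s, ∑ a, marg d0 P pol (t + 1) s a * Q s a
      = ∑ s', (∑ s, ∑ a, marg d0 P pol t s a * P s a s') * (∑ a', pol s' a' * Q s' a') := by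
  refine Finset.sum_congr rfl fun s' _ => ?_
  rw [Finset.mul_sum]
  refine Finset.sum_congr rfl fun a' _ => ?_
  show (∑ s, ∑ a, marg d0 P pol t s a * P s a s') * pol s' a' * Q s' a' = _
  ring

end helpers2

section core
variable {S A : Type*} [Fintype S] [Fintype A]
variable {γ : ℝ} {d0 : S → ℝ} {P : S → A → S → ℝ} {pol : S → A → ℝ}

variable (hγ0 : 0 ≤ γ) (hγ1 : γ < 1)
  (hd0 : ∀ s, 0 ≤ d0 s) (hP : ∀ s a s', 0 ≤ P s a s')
  (hpol : ∀ s a, 0 ≤ pol s a) (hd0sum : ∑ s, d0 s = 1)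
  (hPsum : ∀ s a, ∑ s', P s a s' = 1) (hpolsum : ∀ s, ∑ a, pol s a = 1)

include hγ0 hγ1 hd0 hP hpol hd0sum hPsum hpolsum

set_option maxHeartbeats 1000000 in
lemma core_le (R Q : S → A → ℝ) (V : S → ℝ)
    (hle : ∀ s, ∑ a, pol s a * Q s a ≤ V s) :
    (1 - γ) * (Jret γ d0 P R pol - ∑ s, d0 s * V s)
      ≤ ∑ s, ∑ a, occ γ d0 P pol s a *
          (R s a + γ * ∑ s', P s a s' * V s' - Q s a) := by
  set F : S → A → ℝ := fun s a => R s a + γ * ∑ s', P s a s' * V s' - Q s a with hF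
  set G : S → A → ℝ := fun s a => γ * ∑ s', P s a s' * V s' with hG
  set aa : ℕ → ℝ := fun t => γ ^ t * ∑ s, ∑ a, marg d0 P pol t s a * Q s a with haa
  set bb : ℕ → ℝ := fun t => γ ^ t * ∑ s, ∑ a, marg d0 P pol t s a * G s a with hbb
  set rr : ℕ → ℝ := fun t => γ ^ t * ∑ s, ∑ a, marg d0 P pol t s a * R s a with hrr
  have hsuma : Summable aa := summable_geom_mul hγ0 hγ1 _ (∑ s, ∑ a, |Q s a|)
    (abs_marg_sum_le hd0 hP hpol hd0sum hPsum hpolsum Q)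
  have hsumb : Summable bb := summable_geom_mul hγ0 hγ1 _ (∑ s, ∑ a, |G s a|)
    (abs_marg_sum_le hd0 hP hpol hd0sum hPsum hpolsum G)
  have hsumr : Summable rr := summable_geom_mul hγ0 hγ1 _ (∑ s, ∑ a, |R s a|)
    (abs_marg_sum_le hd0 hP hpol hd0sum hPsum hpolsum R)
  have ha1 : Summable (fun t => aa (t + 1)) := (summable_nat_add_iff 1).mpr hsuma
  have hsplit : ∀ t, γ ^ t * ∑ s, ∑ a, marg d0 P pol t s a * F s a
      = rr t + (bb t - aa t) := by
    intro t
    have h1 : ∑ s, ∑ a, marg d0 P pol t s a * F s a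
        = ∑ s, ∑ a, (marg d0 P pol t s a * R s a
            + (marg d0 P pol t s a * G s a - marg d0 P pol t s a * Q s a)) := by
      refine Finset.sum_congr rfl fun s _ => Finset.sum_congr rfl fun a _ => ?_
      simp only [hF, hG]; ring
    rw [h1]
    simp only [Finset.sum_add_distrib, Finset.sum_sub_distrib, haa, hbb, hrr]
    try ring
  have hbt : ∀ t, ∑ s, ∑ a, marg d0 P pol t s a * G s a
      = γ * ∑ s', (∑ s, ∑ a, marg d0 P pol t s a * P s a s') * V s' := by
    intro t
    calc ∑ s, ∑ a, marg d0 P pol t s a * G s a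
        = ∑ s, ∑ a, ∑ s', γ * (marg d0 P pol t s a * P s a s' * V s') := by
          refine Finset.sum_congr rfl fun s _ => Finset.sum_congr rfl fun a _ => ?_
          simp only [hG, Finset.mul_sum]
          exact Finset.sum_congr rfl fun s' _ => by ring
      _ = ∑ s', ∑ s, ∑ a, γ * (marg d0 P pol t s a * P s a s' * V s') := by
          rw [show (∑ s, ∑ a, ∑ s', γ * (marg d0 P pol t s a * P s a s' * V s'))
              = ∑ s, ∑ s', ∑ a, γ * (marg d0 P pol t s a * P s a s' * V s') from
            Finset.sum_congr rfl fun s _ => Finset.sum_comm]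
          exact Finset.sum_comm
      _ = γ * ∑ s', (∑ s, ∑ a, marg d0 P pol t s a * P s a s') * V s' := by
          simp only [Finset.mul_sum, Finset.sum_mul]
          try exact Finset.sum_congr rfl fun s' _ => Finset.sum_congr rfl fun s _ =>
            Finset.sum_congr rfl fun a _ => by ring
  have hba : ∀ t, aa (t + 1) ≤ bb t := by
    intro t
    have hν : ∀ s', 0 ≤ ∑ s, ∑ a, marg d0 P pol t s a * P s a s' := fun s' =>
      Finset.sum_nonneg fun s _ => Finset.sum_nonneg fun a _ =>
        mul_nonneg (marg_nonneg hd0 hP hpol t s a) (hP s a s')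
    have e1 : aa (t + 1) = γ ^ (t + 1) * ∑ s', (∑ s, ∑ a, marg d0 P pol t s a * P s a s')
        * (∑ a', pol s' a' * Q s' a') := by
      simp only [haa]
      rw [marg_step]
    have e2 : bb t = γ ^ (t + 1) * ∑ s', (∑ s, ∑ a, marg d0 P pol t s a * P s a s')
        * V s' := by
      simp only [hbb]
      rw [hbt, pow_succ]; ring
    rw [e1, e2]
    refine mul_le_mul_of_nonneg_left (Finset.sum_le_sum fun s' _ => ?_) (pow_nonneg hγ0 _)
    exact mul_le_mul_of_nonneg_left (hle s') (hν s')
  have htend : Filter.Tendsto aa Filter.atTop (nhds 0) := by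
    refine squeeze_zero_norm (a := fun n => (∑ s, ∑ a, |Q s a|) * γ ^ n) (fun n => ?_) ?_
    · rw [Real.norm_eq_abs, haa, abs_mul, abs_pow, abs_of_nonneg hγ0, mul_comm]
      exact mul_le_mul_of_nonneg_right
        (abs_marg_sum_le hd0 hP hpol hd0sum hPsum hpolsum Q n) (pow_nonneg hγ0 n)
    · simpa using (tendsto_pow_atTop_nhds_zero_of_lt_one hγ0 hγ1).const_mul
        (∑ s, ∑ a, |Q s a|)
  have hteles : HasSum (fun t => aa (t + 1) - aa t) (-(aa 0)) := by
    have hs : Summable (fun t => aa (t + 1) - aa t) := ha1.sub hsuma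
    rw [hs.hasSum_iff_tendsto_nat]
    have heq : ∀ n, ∑ i ∈ Finset.range n, (aa (i + 1) - aa i) = aa n - aa 0 :=
      fun n => Finset.sum_range_sub aa n
    simp only [heq]
    simpa using htend.sub (tendsto_const_nhds (x := aa 0))
  have ha0 : aa 0 ≤ ∑ s, d0 s * V s := by
    have : aa 0 = ∑ s, d0 s * ∑ a, pol s a * Q s a := by
      simp only [haa]
      simp only [pow_zero, one_mul, marg]
      refine Finset.sum_congr rfl fun s _ => ?_
      rw [Finset.mul_sum]
      exact Finset.sum_congr rfl fun a _ => by ring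
    rw [this]
    exact Finset.sum_le_sum fun s _ => mul_le_mul_of_nonneg_left (hle s) (hd0 s)
  rw [occ_expand hd0 hP hpol hd0sum hPsum hpolsum hγ0 hγ1 F]
  refine mul_le_mul_of_nonneg_left ?_ (by linarith)
  have h5 : ∑' t, γ ^ t * ∑ s, ∑ a, marg d0 P pol t s a * F s a
      = (∑' t, rr t) + ∑' t, (bb t - aa t) := by
    rw [← Summable.tsum_add hsumr (hsumb.sub hsuma)]
    exact tsum_congr hsplit
  have h6 : -(aa 0) ≤ ∑' t, (bb t - aa t) := by
    rw [← hteles.tsum_eq]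
    exact Summable.tsum_le_tsum (fun t => sub_le_sub_right (hba t) (aa t))
      (ha1.sub hsuma) (hsumb.sub hsuma)
  have hJ : Jret γ d0 P R pol = ∑' t, rr t := by rw [Jret]
  rw [h5]
  linarith [ha0, h6, hJ]

set_option maxHeartbeats 1000000 in
lemma core_eq (R Q : S → A → ℝ) (V : S → ℝ)
    (heqV : ∀ s, ∑ a, pol s a * Q s a = V s) :
    ∑ s, ∑ a, occ γ d0 P pol s a *
          (R s a + γ * ∑ s', P s a s' * V s' - Q s a)
      = (1 - γ) * (Jret γ d0 P R pol - ∑ s, d0 s * V s) := by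
  set F : S → A → ℝ := fun s a => R s a + γ * ∑ s', P s a s' * V s' - Q s a with hF
  set G : S → A → ℝ := fun s a => γ * ∑ s', P s a s' * V s' with hG
  set aa : ℕ → ℝ := fun t => γ ^ t * ∑ s, ∑ a, marg d0 P pol t s a * Q s a with haa
  set bb : ℕ → ℝ := fun t => γ ^ t * ∑ s, ∑ a, marg d0 P pol t s a * G s a with hbb
  set rr : ℕ → ℝ := fun t => γ ^ t * ∑ s, ∑ a, marg d0 P pol t s a * R s a with hrr
  have hsuma : Summable aa := summable_geom_mul hγ0 hγ1 _ (∑ s, ∑ a, |Q s a|)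
    (abs_marg_sum_le hd0 hP hpol hd0sum hPsum hpolsum Q)
  have hsumr : Summable rr := summable_geom_mul hγ0 hγ1 _ (∑ s, ∑ a, |R s a|)
    (abs_marg_sum_le hd0 hP hpol hd0sum hPsum hpolsum R)
  have ha1 : Summable (fun t => aa (t + 1)) := (summable_nat_add_iff 1).mpr hsuma
  have hsplit : ∀ t, γ ^ t * ∑ s, ∑ a, marg d0 P pol t s a * F s a
      = rr t + (bb t - aa t) := by
    intro t
    have h1 : ∑ s, ∑ a, marg d0 P pol t s a * F s a
        = ∑ s, ∑ a, (marg d0 P pol t s a * R s a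
            + (marg d0 P pol t s a * G s a - marg d0 P pol t s a * Q s a)) := by
      refine Finset.sum_congr rfl fun s _ => Finset.sum_congr rfl fun a _ => ?_
      simp only [hF, hG]; ring
    rw [h1]
    simp only [Finset.sum_add_distrib, Finset.sum_sub_distrib, haa, hbb, hrr]
    try ring
  have hbt : ∀ t, ∑ s, ∑ a, marg d0 P pol t s a * G s a
      = γ * ∑ s', (∑ s, ∑ a, marg d0 P pol t s a * P s a s') * V s' := by
    intro t
    calc ∑ s, ∑ a, marg d0 P pol t s a * G s a
        = ∑ s, ∑ a, ∑ s', γ * (marg d0 P pol t s a * P s a s' * V s') := by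
          refine Finset.sum_congr rfl fun s _ => Finset.sum_congr rfl fun a _ => ?_
          simp only [hG, Finset.mul_sum]
          exact Finset.sum_congr rfl fun s' _ => by ring
      _ = ∑ s', ∑ s, ∑ a, γ * (marg d0 P pol t s a * P s a s' * V s') := by
          rw [show (∑ s, ∑ a, ∑ s', γ * (marg d0 P pol t s a * P s a s' * V s'))
              = ∑ s, ∑ s', ∑ a, γ * (marg d0 P pol t s a * P s a s' * V s') from
            Finset.sum_congr rfl fun s _ => Finset.sum_comm]
          exact Finset.sum_comm
      _ = γ * ∑ s', (∑ s, ∑ a, marg d0 P pol t s a * P s a s') * V s' := by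
          simp only [Finset.mul_sum, Finset.sum_mul]
          try exact Finset.sum_congr rfl fun s' _ => Finset.sum_congr rfl fun s _ =>
            Finset.sum_congr rfl fun a _ => by ring
  have hba : ∀ t, bb t = aa (t + 1) := by
    intro t
    have e1 : aa (t + 1) = γ ^ (t + 1) * ∑ s', (∑ s, ∑ a, marg d0 P pol t s a * P s a s')
        * (∑ a', pol s' a' * Q s' a') := by
      simp only [haa]
      rw [marg_step]
    have e2 : bb t = γ ^ (t + 1) * ∑ s', (∑ s, ∑ a, marg d0 P pol t s a * P s a s')
        * V s' := by
      simp only [hbb]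
      rw [hbt, pow_succ]; ring
    rw [e1, e2]
    congr 1
    exact Finset.sum_congr rfl fun s' _ => by rw [heqV s']
  have hsumb : Summable bb := by
    have : bb = fun t => aa (t + 1) := funext hba
    rw [this]; exact ha1
  have htend : Filter.Tendsto aa Filter.atTop (nhds 0) := by
    refine squeeze_zero_norm (a := fun n => (∑ s, ∑ a, |Q s a|) * γ ^ n) (fun n => ?_) ?_
    · rw [Real.norm_eq_abs, haa, abs_mul, abs_pow, abs_of_nonneg hγ0, mul_comm]
      exact mul_le_mul_of_nonneg_right
        (abs_marg_sum_le hd0 hP hpol hd0sum hPsum hpolsum Q n) (pow_nonneg hγ0 n)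
    · simpa using (tendsto_pow_atTop_nhds_zero_of_lt_one hγ0 hγ1).const_mul
        (∑ s, ∑ a, |Q s a|)
  have hteles : HasSum (fun t => aa (t + 1) - aa t) (-(aa 0)) := by
    have hs : Summable (fun t => aa (t + 1) - aa t) := ha1.sub hsuma
    rw [hs.hasSum_iff_tendsto_nat]
    have heq2 : ∀ n, ∑ i ∈ Finset.range n, (aa (i + 1) - aa i) = aa n - aa 0 :=
      fun n => Finset.sum_range_sub aa n
    simp only [heq2]
    simpa using htend.sub (tendsto_const_nhds (x := aa 0))
  have ha0 : aa 0 = ∑ s, d0 s * V s := by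
    simp only [haa]
    simp only [pow_zero, one_mul, marg]
    refine Finset.sum_congr rfl fun s _ => ?_
    rw [← heqV s, Finset.mul_sum]
    exact Finset.sum_congr rfl fun a _ => by ring
  rw [occ_expand hd0 hP hpol hd0sum hPsum hpolsum hγ0 hγ1 F]
  congr 1
  have h5 : ∑' t, γ ^ t * ∑ s, ∑ a, marg d0 P pol t s a * F s a
      = (∑' t, rr t) + ∑' t, (bb t - aa t) := by
    rw [← Summable.tsum_add hsumr (hsumb.sub hsuma)]
    exact tsum_congr hsplit
  have h6 : ∑' t, (bb t - aa t) = -(aa 0) := by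
    rw [← hteles.tsum_eq]
    exact tsum_congr fun t => by rw [hba t]
  have hJ : Jret γ d0 P R pol = ∑' t, rr t := by rw [Jret]
  rw [h5, h6, ha0, hJ]
  ring

end core

end autohelpers

/-- Telescoping performance difference:
    `J(π) - J(π_Q) ≤ E_{d_π}[TQ - Q]/(1-γ) + E_{d_{π_Q}}[Q - TQ]/(1-γ)`. -/
theorem stmt3 {S A : Type*} [Fintype S] [Fintype A] [Nonempty A] [DecidableEq A]
    (γ : ℝ) (hγ0 : 0 ≤ γ) (hγ1 : γ < 1)
    (d0 : S → ℝ) (hd0 : ∀ s, 0 ≤ d0 s) (hd0sum : ∑ s, d0 s = 1)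
    (P : S → A → S → ℝ) (hP : ∀ s a s', 0 ≤ P s a s') (hPsum : ∀ s a, ∑ s', P s a s' = 1)
    (R : S → A → ℝ)
    (pol : S → A → ℝ) (hpol : ∀ s a, 0 ≤ pol s a) (hpolsum : ∀ s, ∑ a, pol s a = 1)
    (Q : S → A → ℝ) (g : S → A) (hg : ∀ s a, Q s a ≤ Q s (g s)) :
    Jret γ d0 P R pol - Jret γ d0 P R (detPol g)
      ≤ (1 / (1 - γ)) * (∑ s, ∑ a, occ γ d0 P pol s a * (bellmanT γ P R Q s a - Q s a))
        + (1 / (1 - γ)) *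
          (∑ s, ∑ a, occ γ d0 P (detPol g) s a * (Q s a - bellmanT γ P R Q s a)) := by
  have hpos : 0 < 1 - γ := by linarith
  set V : S → ℝ := fun s => ⨆ a', Q s a' with hV
  have hVg : ∀ s, V s = Q s (g s) := fun s =>
    le_antisymm (ciSup_le (hg s)) (le_ciSup (Finite.bddAbove_range _) (g s))
  have hTQ : ∀ s a, bellmanT γ P R Q s a = R s a + γ * ∑ s', P s a s' * V s' := by
    intro s a; rfl
  -- detPol properties
  have hdp : ∀ s a, 0 ≤ detPol g s a := by
    intro s a; unfold detPol; split <;> norm_num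
  have hdpsum : ∀ s, ∑ a, detPol g s a = 1 := by
    intro s; simp [detPol]
  have hdpQ : ∀ s, ∑ a, detPol g s a * Q s a = V s := by
    intro s
    rw [hVg s]
    simp [detPol, ite_mul, one_mul, zero_mul]
  have hleQ : ∀ s, ∑ a, pol s a * Q s a ≤ V s := by
    intro s
    calc ∑ a, pol s a * Q s a ≤ ∑ a, pol s a * Q s (g s) :=
          Finset.sum_le_sum fun a _ => mul_le_mul_of_nonneg_left (hg s a) (hpol s a)
      _ = Q s (g s) := by rw [← Finset.sum_mul, hpolsum, one_mul]
      _ = V s := (hVg s).symm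
  have h1 := core_le hγ0 hγ1 hd0 hP hpol hd0sum hPsum hpolsum R Q V hleQ
  have h2 := core_eq hγ0 hγ1 hd0 hP hdp hd0sum hPsum hdpsum R Q V hdpQ
  set Xp := ∑ s, ∑ a, occ γ d0 P pol s a * (R s a + γ * ∑ s', P s a s' * V s' - Q s a)
    with hXp
  set Xg := ∑ s, ∑ a, occ γ d0 P (detPol g) s a *
    (R s a + γ * ∑ s', P s a s' * V s' - Q s a) with hXg
  have hgoal1 : ∑ s, ∑ a, occ γ d0 P pol s a * (bellmanT γ P R Q s a - Q s a) = Xp := by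
    rw [hXp]
    exact Finset.sum_congr rfl fun s _ => Finset.sum_congr rfl fun a _ => by rw [hTQ]
  have hgoal2 : ∑ s, ∑ a, occ γ d0 P (detPol g) s a * (Q s a - bellmanT γ P R Q s a)
      = -Xg := by
    rw [hXg, ← Finset.sum_neg_distrib]
    refine Finset.sum_congr rfl fun s _ => ?_
    rw [← Finset.sum_neg_distrib]
    exact Finset.sum_congr rfl fun a _ => by rw [hTQ]; ring
  rw [hgoal1, hgoal2]
  set D := ∑ s, d0 s * V s
  set Jp := Jret γ d0 P R pol
  set Jg := Jret γ d0 P R (detPol g)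
  -- h1 : (1-γ)*(Jp - D) ≤ Xp ; h2 : Xg = (1-γ)*(Jg - D)
  have e1 : Jp - D = (1 / (1 - γ)) * ((1 - γ) * (Jp - D)) := by
    field_simp
  have e2 : (1 / (1 - γ)) * Xg = Jg - D := by
    rw [h2]; field_simp
  have e3 : (1 / (1 - γ)) * ((1 - γ) * (Jp - D)) ≤ (1 / (1 - γ)) * Xp :=
    mul_le_mul_of_nonneg_left h1 (by positivity)
  have e4 : (1 / (1 - γ)) * (-Xg) = -(Jg - D) := by
    rw [mul_neg, e2]
  linarith [e1, e3, e4]
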